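/- Let a_1, ..., a_m be elements of L = GF(2^n) and k_1, ..., k_m positive integers, and set Q(x) = \sum_{i=1}^m a_i x^{2^{k_i}+1} and L(u) = \sum_{i=1}^m ( a_i u^{2^{k_i}} + a_i^{2^{-k_i}} u^{2^{-k_i}} ). Then the square of the exponential sum satisfies ( \sum_{x \in L} (-1)^{Tr(Q(x))} )^2 = 2^n \cdot \sum_{u \in K} (-1)^{Tr(Q(u))}, where K = { u \in L : L(u) = 0 }. -/

import Mathlib

noncomputable instance {n : ℕ} : Fintype (GaloisField 2 n) := Fintype.ofFinite _

/-- `ipow j x` is `x^{2^{-j}}`, the unique element of `GF(2^n)` whose `2^j`-th power is `x`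
(the inverse of the `j`-th iterate of the Frobenius automorphism). -/
noncomputable def ipow {n : ℕ} (j : ℕ) (x : GaloisField 2 n) : GaloisField 2 n :=
  Function.invFun (fun y : GaloisField 2 n => y ^ 2 ^ j) x

namespace Stmt7Aux

variable {n : ℕ}

lemma pow_pow_inj (j : ℕ) : Function.Injective (fun y : GaloisField 2 n => y ^ 2 ^ j) := by
  intro x y h
  have h2 : (x - y) ^ 2 ^ j = 0 := by
    rw [sub_pow_char_pow]; simp only at h; rw [h, sub_self]
  have := pow_eq_zero_iff (pow_ne_zero j (two_ne_zero)) |>.mp h2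
  exact sub_eq_zero.mp this

lemma ipow_pow (j : ℕ) (x : GaloisField 2 n) : (ipow j x) ^ 2 ^ j = x :=
  Function.rightInverse_invFun (Finite.injective_iff_surjective.mp (pow_pow_inj j)) x

lemma ipow_mul (j : ℕ) (x y : GaloisField 2 n) : ipow j (x * y) = ipow j x * ipow j y := by
  apply pow_pow_inj j
  simp only [mul_pow, ipow_pow]

noncomputable def frobAlgEquiv (n : ℕ) : GaloisField 2 n ≃ₐ[ZMod 2] GaloisField 2 n :=
  AlgEquiv.ofRingEquiv (f := RingEquiv.ofBijective (frobenius (GaloisField 2 n) 2)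
    ⟨by have := pow_pow_inj (n := n) 1; simpa [frobenius_def] using this,
     Finite.injective_iff_surjective.mp (by have := pow_pow_inj (n := n) 1; simpa [frobenius_def] using this)⟩)
    (fun r => by
      show (algebraMap (ZMod 2) (GaloisField 2 n) r) ^ 2 = algebraMap (ZMod 2) (GaloisField 2 n) r
      rw [← map_pow]
      congr 1
      revert r; decide)

lemma trace_sq (x : GaloisField 2 n) :
    Algebra.trace (ZMod 2) (GaloisField 2 n) (x ^ 2) = Algebra.trace (ZMod 2) (GaloisField 2 n) x := by
  have := Algebra.trace_eq_of_algEquiv (frobAlgEquiv n) x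
  exact this

lemma trace_pow_pow (j : ℕ) (x : GaloisField 2 n) :
    Algebra.trace (ZMod 2) (GaloisField 2 n) (x ^ 2 ^ j) = Algebra.trace (ZMod 2) (GaloisField 2 n) x := by
  induction j with
  | zero => simp
  | succ j ih => rw [pow_succ, pow_mul, trace_sq, ih]

lemma exists_trace_ne (c : GaloisField 2 n) (hc : c ≠ 0) :
    ∃ x, Algebra.trace (ZMod 2) (GaloisField 2 n) (c * x) ≠ 0 := by
  have htr := (traceForm_nondegenerate (ZMod 2) (GaloisField 2 n)).1 c
  simp_rw [Algebra.traceForm_apply] at htr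
  by_contra! hf
  exact hc (htr hf)

/-- the sign character of `ZMod 2` -/
def ψ (t : ZMod 2) : ℤ := if t = 0 then 1 else -1

lemma ψ_add (s t : ZMod 2) : ψ (s + t) = ψ s * ψ t := by revert s t; decide

open scoped Classical in
lemma sum_ψ (hn : 0 < n) (c : GaloisField 2 n) :
    ∑ x : GaloisField 2 n, ψ (Algebra.trace (ZMod 2) (GaloisField 2 n) (c * x)) =
      if c = 0 then (2 ^ n : ℤ) else 0 := by
  by_cases hc : c = 0
  · simp [hc, ψ, Finset.card_univ]
    rw [← Nat.card_eq_fintype_card, GaloisField.card 2 n hn.ne']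
    push_cast; ring
  · rw [if_neg hc]
    obtain ⟨x0, hx0⟩ := exists_trace_ne c hc
    have key : ∑ x : GaloisField 2 n, ψ (Algebra.trace (ZMod 2) (GaloisField 2 n) (c * x))
        = ∑ x : GaloisField 2 n, ψ (Algebra.trace (ZMod 2) (GaloisField 2 n) (c * (x + x0))) :=
      (Equiv.sum_comp (Equiv.addRight x0)
        (fun y => ψ (Algebra.trace (ZMod 2) (GaloisField 2 n) (c * y)))).symm
    have flip : ∀ x : GaloisField 2 n,
        ψ (Algebra.trace (ZMod 2) (GaloisField 2 n) (c * (x + x0)))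
          = - ψ (Algebra.trace (ZMod 2) (GaloisField 2 n) (c * x)) := by
      intro x
      rw [mul_add, map_add, ψ_add]
      have : ψ (Algebra.trace (ZMod 2) (GaloisField 2 n) (c * x0)) = -1 := if_neg hx0
      rw [this]; ring
    simp_rw [flip, Finset.sum_neg_distrib] at key
    linarith

end Stmt7Aux

open Stmt7Aux in
open scoped Classical in
/-- With `Q(x) = ∑ aᵢ x^{2^{kᵢ}+1}` and `L(u) = ∑ (aᵢ u^{2^{kᵢ}} + aᵢ^{2^{-kᵢ}} u^{2^{-kᵢ}})`,
the square of `∑_x (-1)^{Tr(Q(x))}` equals `2^n ∑_{u ∈ K} (-1)^{Tr(Q(u))}` where `K = ker L`. -/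
theorem stmt_7 (n m : ℕ) (hn : 0 < n) (a : Fin m → GaloisField 2 n) (kk : Fin m → ℕ)
    (hkk : ∀ i, 0 < kk i) :
    (∑ x : GaloisField 2 n,
        if Algebra.trace (ZMod 2) (GaloisField 2 n)
            (∑ i, a i * x ^ (2 ^ kk i + 1)) = 0 then (1 : ℤ) else -1) ^ 2 =
      2 ^ n *
        ∑ u ∈ Finset.univ.filter (fun u : GaloisField 2 n =>
            (∑ i, (a i * u ^ 2 ^ kk i + ipow (kk i) (a i) * ipow (kk i) u)) = 0),
          if Algebra.trace (ZMod 2) (GaloisField 2 n)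
              (∑ i, a i * u ^ (2 ^ kk i + 1)) = 0 then (1 : ℤ) else -1 := by
  classical
  set T := Algebra.trace (ZMod 2) (GaloisField 2 n) with hT
  set Q : GaloisField 2 n → GaloisField 2 n := fun x => ∑ i, a i * x ^ (2 ^ kk i + 1) with hQdef
  set Lm : GaloisField 2 n → GaloisField 2 n := fun u =>
    ∑ i, (a i * u ^ 2 ^ kk i + ipow (kk i) (a i) * ipow (kk i) u) with hLdef
  have h2 : (2 : GaloisField 2 n) = 0 := by
    have := CharP.cast_eq_zero (GaloisField 2 n) 2
    exact_mod_cast this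
  have hgoal : ∀ x : GaloisField 2 n,
      (if T (∑ i, a i * x ^ (2 ^ kk i + 1)) = 0 then (1 : ℤ) else -1) = ψ (T (Q x)) := by
    intro x
    simp only [hQdef, ψ]
  have hexpand : ∀ x u : GaloisField 2 n, Q x + Q (x + u)
      = Q u + ∑ i, (a i * u ^ 2 ^ kk i * x + a i * x ^ 2 ^ kk i * u) := by
    intro x u
    simp only [hQdef]
    rw [← Finset.sum_add_distrib, ← Finset.sum_add_distrib]
    apply Finset.sum_congr rfl
    intro i _
    have hpow : (x + u) ^ 2 ^ kk i = x ^ 2 ^ kk i + u ^ 2 ^ kk i := add_pow_char_pow x u 2 (kk i)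
    have hxu : (x + u) ^ (2 ^ kk i + 1) = (x ^ 2 ^ kk i + u ^ 2 ^ kk i) * (x + u) := by
      rw [pow_succ, hpow]
    rw [hxu]
    linear_combination (a i * x ^ 2 ^ kk i * x) * h2
  have htrB : ∀ x u : GaloisField 2 n,
      T (∑ i, (a i * u ^ 2 ^ kk i * x + a i * x ^ 2 ^ kk i * u)) = T (Lm u * x) := by
    intro x u
    have hR : Lm u * x = ∑ i, (a i * u ^ 2 ^ kk i * x + ipow (kk i) (a i) * ipow (kk i) u * x) := by
      rw [hLdef, Finset.sum_mul]
      apply Finset.sum_congr rfl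
      intro i _
      ring
    rw [hR, map_sum, map_sum]
    apply Finset.sum_congr rfl
    intro i _
    rw [map_add, map_add]
    congr 1
    have hw : (ipow (kk i) (a i) * ipow (kk i) u * x) ^ 2 ^ kk i = a i * x ^ 2 ^ kk i * u := by
      rw [mul_pow, mul_pow, ipow_pow, ipow_pow]
      ring
    rw [hT, ← hw, trace_pow_pow]
  have hTradd : ∀ x u : GaloisField 2 n,
      T (Q x) + T (Q (x + u)) = T (Q u) + T (Lm u * x) := by
    intro x u
    rw [← map_add, ← map_add, hexpand x u, map_add, htrB, ← map_add]
  simp_rw [hgoal]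
  calc (∑ x : GaloisField 2 n, ψ (T (Q x))) ^ 2
      = ∑ x : GaloisField 2 n, ∑ y : GaloisField 2 n, ψ (T (Q x) + T (Q y)) := by
        rw [sq, Finset.sum_mul_sum]
        simp_rw [ψ_add]
    _ = ∑ x : GaloisField 2 n, ∑ u : GaloisField 2 n, ψ (T (Q x) + T (Q (x + u))) := by
        refine Finset.sum_congr rfl fun x _ => ?_
        exact (Equiv.sum_comp (Equiv.addLeft x) fun y => ψ (T (Q x) + T (Q y))).symm
    _ = ∑ u : GaloisField 2 n, ∑ x : GaloisField 2 n, ψ (T (Q u)) * ψ (T (Lm u * x)) := by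
        rw [Finset.sum_comm]
        exact Finset.sum_congr rfl fun u _ => Finset.sum_congr rfl fun x _ => by
          rw [hTradd x u, ψ_add]
    _ = ∑ u : GaloisField 2 n, ψ (T (Q u)) * (if Lm u = 0 then (2 ^ n : ℤ) else 0) := by
        refine Finset.sum_congr rfl fun u _ => ?_
        rw [← Finset.mul_sum]
        congr 1
        rw [hT]
        exact sum_ψ hn (Lm u)
    _ = 2 ^ n * ∑ u ∈ Finset.univ.filter (fun u : GaloisField 2 n => Lm u = 0), ψ (T (Q u)) := by
        rw [Finset.mul_sum, Finset.sum_filter]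
        refine Finset.sum_congr rfl fun u _ => ?_
        by_cases h : Lm u = 0 <;> simp [h] <;> ring
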